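/- Given C¹ functions v, w with v ≠ w satisfying v_t = w v_x and w_t = v w_x, and smooth functions f, g, the conservation law identity holds: ∂_t((f(v)−g(w))/(v−w)) = ∂_x((w f(v) − v g(w))/(v−w)). -/

import Mathlib

/-- Partial derivative; coordinate `0` is `t`, coordinate `1` is `x`. -/
noncomputable def pd (i : Fin 2) (f : (Fin 2 → ℝ) → ℝ) (x : Fin 2 → ℝ) : ℝ :=
  fderiv ℝ f x (Pi.single i 1)


lemma pd_comp (i : Fin 2) (φ : ℝ → ℝ) (u : (Fin 2 → ℝ) → ℝ) (z : Fin 2 → ℝ)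
    (hφ : DifferentiableAt ℝ φ (u z)) (hu : DifferentiableAt ℝ u z) :
    pd i (fun y => φ (u y)) z = deriv φ (u z) * pd i u z := by
  unfold pd
  have : (fun y => φ (u y)) = φ ∘ u := rfl
  rw [this, fderiv_comp (x := z) hφ hu]
  simp only [ContinuousLinearMap.comp_apply]
  set a := fderiv ℝ u z (Pi.single i 1)
  have := (fderiv ℝ φ (u z)).map_smul a 1
  simp only [smul_eq_mul, mul_one] at this
  rw [this, fderiv_apply_one_eq_deriv, mul_comm]

lemma pd_mul (i : Fin 2) (F G : (Fin 2 → ℝ) → ℝ) (z : Fin 2 → ℝ)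
    (hF : DifferentiableAt ℝ F z) (hG : DifferentiableAt ℝ G z) :
    pd i (fun y => F y * G y) z = pd i F z * G z + F z * pd i G z := by
  unfold pd
  rw [fderiv_fun_mul hF hG]
  simp [smul_eq_mul]
  ring

lemma pd_sub (i : Fin 2) (F G : (Fin 2 → ℝ) → ℝ) (z : Fin 2 → ℝ)
    (hF : DifferentiableAt ℝ F z) (hG : DifferentiableAt ℝ G z) :
    pd i (fun y => F y - G y) z = pd i F z - pd i G z := by
  unfold pd
  rw [fderiv_fun_sub hF hG]
  simp

lemma pd_inv (i : Fin 2) (G : (Fin 2 → ℝ) → ℝ) (z : Fin 2 → ℝ)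
    (hG : DifferentiableAt ℝ G z) (hGz : G z ≠ 0) :
    pd i (fun y => (G y)⁻¹) z = -pd i G z / (G z) ^ 2 := by
  rw [pd_comp i Inv.inv G z (differentiableAt_inv hGz) hG, deriv_inv]
  field_simp

lemma pd_div (i : Fin 2) (F G : (Fin 2 → ℝ) → ℝ) (z : Fin 2 → ℝ)
    (hF : DifferentiableAt ℝ F z) (hG : DifferentiableAt ℝ G z) (hGz : G z ≠ 0) :
    pd i (fun y => F y / G y) z
      = (pd i F z * G z - F z * pd i G z) / (G z) ^ 2 := by
  have h1 : (fun y => F y / G y) = fun y => F y * (G y)⁻¹ := by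
    funext y; rw [div_eq_mul_inv]
  rw [h1, pd_mul i F (fun y => (G y)⁻¹) z hF (hG.inv hGz), pd_inv i G z hG hGz]
  field_simp
  ring

/-- For C¹ functions `v ≠ w` satisfying `v_t = w v_x`, `w_t = v w_x`, and C¹
functions `f, g` of one variable, the conservation law
`∂_t((f(v)−g(w))/(v−w)) = ∂_x((w f(v) − v g(w))/(v−w))` holds. -/
theorem conservation_law
    (s : Set (Fin 2 → ℝ)) (hs : IsOpen s)
    (v w : (Fin 2 → ℝ) → ℝ) (f g : ℝ → ℝ)
    (hv : ContDiffOn ℝ 1 v s) (hw : ContDiffOn ℝ 1 w s)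
    (hf : ContDiff ℝ 1 f) (hg : ContDiff ℝ 1 g)
    (hne : ∀ z ∈ s, v z ≠ w z)
    (h1 : ∀ z ∈ s, pd 0 v z = w z * pd 1 v z)
    (h2 : ∀ z ∈ s, pd 0 w z = v z * pd 1 w z) :
    ∀ z ∈ s,
      pd 0 (fun y => (f (v y) - g (w y)) / (v y - w y)) z
        = pd 1 (fun y => (w y * f (v y) - v y * g (w y)) / (v y - w y)) z := by
  intro z hz
  have hvz : DifferentiableAt ℝ v z :=
    ((hv.contDiffAt (hs.mem_nhds hz)).differentiableAt one_ne_zero)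
  have hwz : DifferentiableAt ℝ w z :=
    ((hw.contDiffAt (hs.mem_nhds hz)).differentiableAt one_ne_zero)
  have hfd : Differentiable ℝ f := hf.differentiable one_ne_zero
  have hgd : Differentiable ℝ g := hg.differentiable one_ne_zero
  have hfv : DifferentiableAt ℝ (fun y => f (v y)) z :=
    DifferentiableAt.comp z (hfd (v z)) hvz
  have hgw : DifferentiableAt ℝ (fun y => g (w y)) z :=
    DifferentiableAt.comp z (hgd (w z)) hwz
  have hD : DifferentiableAt ℝ (fun y => v y - w y) z := hvz.sub hwz
  have hDz : v z - w z ≠ 0 := sub_ne_zero.mpr (hne z hz)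
  have hnum1 : DifferentiableAt ℝ (fun y => f (v y) - g (w y)) z := hfv.sub hgw
  have hwf : DifferentiableAt ℝ (fun y => w y * f (v y)) z := hwz.mul hfv
  have hvg : DifferentiableAt ℝ (fun y => v y * g (w y)) z := hvz.mul hgw
  have hnum2 : DifferentiableAt ℝ (fun y => w y * f (v y) - v y * g (w y)) z :=
    hwf.sub hvg
  rw [pd_div 0 _ _ z hnum1 hD hDz, pd_div 1 _ _ z hnum2 hD hDz,
    pd_sub 0 _ _ z hfv hgw, pd_sub 1 _ _ z hwf hvg,
    pd_sub 0 _ _ z hvz hwz, pd_sub 1 _ _ z hvz hwz,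
    pd_mul 1 _ _ z hwz hfv, pd_mul 1 _ _ z hvz hgw,
    pd_comp 0 f v z (hfd (v z)) hvz, pd_comp 0 g w z (hgd (w z)) hwz,
    pd_comp 1 f v z (hfd (v z)) hvz, pd_comp 1 g w z (hgd (w z)) hwz,
    h1 z hz, h2 z hz]
  ring
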